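/- Let S be a group-bound inverse semigroup, let a, b ∈ S¹ and x ∈ S. Then ba·x is defined if and only if both a·x and b·(a·x) are defined; moreover, whenever ba·x is defined, one has ba·x = b·(a·x). (In other words, the partial conjugation maps x ↦ a·x define an action of S¹ on S by partial one-to-one transformations.) -/

import Mathlib

namespace SgConjPaper

/-- `spow x n = x^(n+1)`: positive powers of an element of a semigroup. -/
def spow {S : Type*} [Semigroup S] (x : S) : ℕ → S
  | 0 => x
  | n + 1 => spow x n * x

/-- `a` lies in the maximal subgroup of `S` whose identity is the idempotent
`e` (i.e. `e` is a two-sided identity for `a` and `a` is invertible over `e`). -/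
def InMaxSubgroup {S : Type*} [Semigroup S] (e a : S) : Prop :=
  e * a = a ∧ a * e = a ∧ ∃ b : S, e * b = b ∧ b * e = b ∧ a * b = e ∧ b * a = e

/-- `e` is the idempotent `e_x`: the identity of the maximal subgroup
containing some positive power of `x`. -/
def IsEIdem {S : Type*} [Semigroup S] (x e : S) : Prop :=
  ∃ k : ℕ, InMaxSubgroup e (spow x k)

/-- A semigroup is group-bound if some positive power of every element lies
in a subgroup. -/
def GroupBound (S : Type*) [Semigroup S] : Prop := ∀ x : S, ∃ e : S, IsEIdem x e

/-- Primary conjugacy: `x = uv`, `y = vu` for some `u, v ∈ S¹`. -/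
def PrimConj {S : Type*} [Semigroup S] (x y : S) : Prop :=
  ∃ u v : WithOne S, (x : WithOne S) = u * v ∧ (y : WithOne S) = v * u

/-- Conjugacy `∼`: the transitive closure of primary conjugacy. -/
def SgConj {S : Type*} [Semigroup S] : S → S → Prop := Relation.TransGen PrimConj

/-- Conjugacy in the character sense `≡`: equal traces under every
finite-dimensional complex representation. -/
def CharEq {S : Type*} [Semigroup S] (x y : S) : Prop :=
  ∀ (V : Type) (_ : AddCommGroup V) (_ : Module ℂ V) (_ : FiniteDimensional ℂ V)
    (φ : S →ₙ* Module.End ℂ V),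
    LinearMap.trace ℂ V (φ x) = LinearMap.trace ℂ V (φ y)

/-- A semigroup is regular if for every `a` there is `b` with `a = aba`. -/
def Regular (S : Type*) [Semigroup S] : Prop := ∀ a : S, ∃ b : S, a * b * a = a

/-- `inv` makes `S` an inverse semigroup: `inv a` is the unique inverse of
each element `a`. -/
def IsInverseSemigroup (S : Type*) [Semigroup S] (inv : S → S) : Prop :=
  (∀ a : S, a * inv a * a = a) ∧ (∀ a : S, inv a * a * inv a = inv a) ∧
  (∀ a b : S, a * b * a = a → b * a * b = b → b = inv a)

open Classical in
/-- Extension of the inverse map to `S¹ = WithOne S` (with `1⁻¹ = 1`). -/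
noncomputable def inv₁ {S : Type*} [Semigroup S] (inv : S → S) (a : WithOne S) :
    WithOne S :=
  if h : a = 1 then 1 else ((inv (WithOne.unone h) : S) : WithOne S)

/-- The natural partial order on `S¹`: `a ≥ b` iff `b = a e` for some
idempotent `e`. -/
def NatGe {S : Type*} [Semigroup S] (a b : WithOne S) : Prop :=
  ∃ f : WithOne S, f * f = f ∧ b = a * f

/-- The partial action of `S¹` on `S`: `ActsTo inv a x y` says that `a · x` is
defined (i.e. `a⁻¹ a ≥ e_x`) and that its value `a x a⁻¹` equals `y`. -/
def ActsTo {S : Type*} [Semigroup S] (inv : S → S) (a : WithOne S) (x y : S) : Prop :=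
  (∃ e : S, IsEIdem x e ∧ NatGe (inv₁ inv a * a) (e : WithOne S)) ∧
  (y : WithOne S) = a * (x : WithOne S) * inv₁ inv a

/-- `x ≈_p y`: `y = a · x` or `x = a · y` for some `a ∈ S¹`. -/
def ActConjP {S : Type*} [Semigroup S] (inv : S → S) (x y : S) : Prop :=
  ∃ a : WithOne S, ActsTo inv a x y ∨ ActsTo inv a y x

/-- `≈`, conjugacy in the action sense: the transitive closure of `≈_p`. -/
def ActConj {S : Type*} [Semigroup S] (inv : S → S) : S → S → Prop :=
  Relation.TransGen (ActConjP inv)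

section Generic

variable {M : Type*} [Semigroup M] {i : M → M}

lemma pushl {x y z : M} (h : x * y = z) (t : M) : x * (y * t) = z * t := by
  rw [← mul_assoc, h]

lemma inv_invol (hinv : IsInverseSemigroup M i) (a : M) : i (i a) = a :=
  (hinv.2.2 (i a) a (hinv.2.1 a) (hinv.1 a)).symm

lemma idem_inv (hinv : IsInverseSemigroup M i) {e : M} (he : e * e = e) : i e = e :=
  (hinv.2.2 e e (by rw [he, he]) (by rw [he, he])).symm

lemma tri_aba (hinv : IsInverseSemigroup M i) (a : M) : a * (i a * a) = a := by
  rw [← mul_assoc]; exact hinv.1 a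

lemma tri_bab (hinv : IsInverseSemigroup M i) (a : M) : i a * (a * i a) = i a := by
  rw [← mul_assoc]; exact hinv.2.1 a

lemma idem_right (hinv : IsInverseSemigroup M i) (a : M) :
    (a * i a) * (a * i a) = a * i a := by
  rw [mul_assoc a (i a), tri_bab hinv]

lemma idem_left (hinv : IsInverseSemigroup M i) (a : M) :
    (i a * a) * (i a * a) = i a * a := by
  rw [mul_assoc (i a) a, tri_aba hinv]

lemma comm_idem (hinv : IsInverseSemigroup M i) {e f : M} (he : e * e = e)
    (hf : f * f = f) : e * f = f * e := by
  set a := i (e * f) with ha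
  -- a * (e * f) * a = a, normalized
  have hkey : ∀ t : M, a * (e * (f * (a * t))) = a * t := by
    intro t
    have h0 : a * (e * (f * a)) = a := by
      have := hinv.2.1 (e * f)
      rw [← ha] at this
      calc a * (e * (f * a)) = a * (e * f) * a := by simp only [mul_assoc]
        _ = a := this
    calc a * (e * (f * (a * t))) = (a * (e * (f * a))) * t := by simp only [mul_assoc]
      _ = a * t := by rw [h0]
  have haba : ∀ t : M, e * (f * (a * (e * (f * t)))) = e * (f * t) := by
    intro t
    have h0 : e * (f * (a * (e * f))) = e * f := by
      have := hinv.1 (e * f)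
      rw [← ha] at this
      calc e * (f * (a * (e * f))) = e * f * a * (e * f) := by simp only [mul_assoc]
        _ = e * f := this
    calc e * (f * (a * (e * (f * t)))) = (e * (f * (a * (e * f)))) * t := by
          simp only [mul_assoc]
      _ = e * (f * t) := by rw [h0, mul_assoc]
  set q := f * a * e with hq
  -- q is idempotent
  have hqq : q * q = q := by
    calc q * q = f * (a * (e * (f * (a * e)))) := by simp only [hq, mul_assoc]
      _ = f * (a * e) := by rw [hkey (e)]
      _ = q := by rw [hq, mul_assoc]
  -- q is an inverse of e * f
  have hq1 : (e * f) * q * (e * f) = e * f := by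
    calc (e * f) * q * (e * f) = e * (f * (f * (a * (e * (e * f))))) := by
          simp only [hq, mul_assoc]
      _ = e * (f * (a * (e * f))) := by rw [pushl hf, pushl he]
      _ = e * f := by
          have := haba f
          rw [hf] at this
          calc e * (f * (a * (e * f))) = e * (f * (a * (e * (f * f)))) := by rw [hf]
            _ = e * (f * f) := haba f
            _ = e * f := by rw [hf]
  have hq2 : q * (e * f) * q = q := by
    calc q * (e * f) * q = f * (a * (e * (e * (f * (f * (a * e)))))) := by
          simp only [hq, mul_assoc]
      _ = f * (a * (e * (f * (a * e)))) := by rw [pushl he, pushl hf]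
      _ = f * (a * e) := by rw [hkey e]
      _ = q := by rw [hq, mul_assoc]
  have hqa : q = a := hinv.2.2 (e * f) q hq1 hq2
  -- hence i (e*f) is idempotent; then e*f is an inverse of a, and a of itself
  have haa : a * a = a := by rw [← hqa]; exact hqq
  have hef_inv_a : e * f = i a := by
    refine hinv.2.2 a (e * f) ?_ ?_
    · rw [← hqa]; exact hq2
    · rw [← hqa]; exact hq1
  have hia : i a = a := idem_inv hinv haa
  have hef_idem : (e * f) * (e * f) = e * f := by
    rw [hef_inv_a, hia]; exact haa
  -- symmetric: f * e is idempotent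
  have hfe_idem : (f * e) * (f * e) = f * e := by
    set a' := i (f * e) with ha'
    have hkey' : ∀ t : M, a' * (f * (e * (a' * t))) = a' * t := by
      intro t
      have h0 : a' * (f * (e * a')) = a' := by
        have := hinv.2.1 (f * e)
        rw [← ha'] at this
        calc a' * (f * (e * a')) = a' * (f * e) * a' := by simp only [mul_assoc]
          _ = a' := this
      calc a' * (f * (e * (a' * t))) = (a' * (f * (e * a'))) * t := by
            simp only [mul_assoc]
        _ = a' * t := by rw [h0]
    set q' := e * a' * f with hq'
    have hqq' : q' * q' = q' := by
      calc q' * q' = e * (a' * (f * (e * (a' * f)))) := by simp only [hq', mul_assoc]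
        _ = e * (a' * f) := by rw [hkey' f]
        _ = q' := by rw [hq', mul_assoc]
    have hq1' : (f * e) * q' * (f * e) = f * e := by
      calc (f * e) * q' * (f * e) = f * (e * (e * (a' * (f * (f * e))))) := by
            simp only [hq', mul_assoc]
        _ = f * (e * (a' * (f * e))) := by rw [pushl he, pushl hf]
        _ = f * e := by
            have := hinv.1 (f * e)
            rw [← ha'] at this
            calc f * (e * (a' * (f * e))) = f * e * a' * (f * e) := by
                  simp only [mul_assoc]
              _ = f * e := this
    have hq2' : q' * (f * e) * q' = q' := by
      calc q' * (f * e) * q' = e * (a' * (f * (f * (e * (e * (a' * f)))))) := by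
            simp only [hq', mul_assoc]
        _ = e * (a' * (f * (e * (a' * f)))) := by rw [pushl hf, pushl he]
        _ = e * (a' * f) := by rw [hkey' f]
        _ = q' := by rw [hq', mul_assoc]
    have hqa' : q' = a' := hinv.2.2 (f * e) q' hq1' hq2'
    have haa' : a' * a' = a' := by rw [← hqa']; exact hqq'
    have hfe_inv : f * e = i a' := by
      refine hinv.2.2 a' (f * e) ?_ ?_
      · rw [← hqa']; exact hq2'
      · rw [← hqa']; exact hq1'
    rw [hfe_inv, idem_inv hinv haa']; exact haa'
  -- now f*e is an inverse of e*f, hence f*e = i (e*f) = e*f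
  have h1 : (e * f) * (f * e) * (e * f) = e * f := by
    calc (e * f) * (f * e) * (e * f) = e * (f * (f * (e * (e * f)))) := by
          simp only [mul_assoc]
      _ = e * (f * (e * f)) := by rw [pushl hf, pushl he]
      _ = e * f := by
          have := hef_idem
          calc e * (f * (e * f)) = (e * f) * (e * f) := by simp only [mul_assoc]
            _ = e * f := hef_idem
  have h2 : (f * e) * (e * f) * (f * e) = f * e := by
    calc (f * e) * (e * f) * (f * e) = f * (e * (e * (f * (f * e)))) := by
          simp only [mul_assoc]
      _ = f * (e * (f * e)) := by rw [pushl he, pushl hf]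
      _ = f * e := by
          calc f * (e * (f * e)) = (f * e) * (f * e) := by simp only [mul_assoc]
            _ = f * e := hfe_idem
  have : f * e = i (e * f) := hinv.2.2 (e * f) (f * e) h1 h2
  rw [this, ← ha]
  exact hef_inv_a.trans hia


lemma inv_mul' (hinv : IsInverseSemigroup M i) (a b : M) :
    i (a * b) = i b * i a := by
  have c : (b * i b) * (i a * a) = (i a * a) * (b * i b) :=
    comm_idem hinv (idem_right hinv b) (idem_left hinv a)
  refine (hinv.2.2 (a * b) (i b * i a) ?_ ?_).symm
  · calc (a * b) * (i b * i a) * (a * b)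
        = a * (((b * i b) * (i a * a)) * b) := by simp only [mul_assoc]
      _ = a * (((i a * a) * (b * i b)) * b) := by rw [c]
      _ = (a * (i a * a)) * (b * (i b * b)) := by simp only [mul_assoc]
      _ = a * b := by rw [tri_aba hinv, tri_aba hinv]
  · calc (i b * i a) * (a * b) * (i b * i a)
        = i b * (((i a * a) * (b * i b)) * i a) := by simp only [mul_assoc]
      _ = i b * (((b * i b) * (i a * a)) * i a) := by rw [← c]
      _ = (i b * (b * i b)) * (i a * (a * i a)) := by simp only [mul_assoc]
      _ = i b * i a := by rw [tri_bab hinv, tri_bab hinv]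

lemma idem_mul (hinv : IsInverseSemigroup M i) {e f : M} (he : e * e = e)
    (hf : f * f = f) : (e * f) * (e * f) = e * f := by
  calc (e * f) * (e * f) = e * ((f * e) * f) := by simp only [mul_assoc]
    _ = e * ((e * f) * f) := by rw [← comm_idem hinv he hf]
    _ = (e * e) * (f * f) := by simp only [mul_assoc]
    _ = e * f := by rw [he, hf]

lemma spow_comm (x : M) (n : ℕ) : spow x n * x = x * spow x n := by
  induction n with
  | zero => rfl
  | succ n ih =>
      show spow x n * x * x = x * (spow x n * x)
      simp only [mul_assoc, ih]

lemma spow_add (x : M) (m n : ℕ) : spow x m * spow x n = spow x (m + n + 1) := by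
  induction n with
  | zero => rfl
  | succ n ih =>
      show spow x m * (spow x n * x) = spow x (m + (n+1) + 1)
      rw [← mul_assoc, ih]
      show spow x (m + n + 1) * x = spow x (m + (n + 1) + 1)
      have : m + (n + 1) + 1 = (m + n + 1) + 1 := by omega
      rw [this]
      rfl

lemma spow_spow (x : M) (k l : ℕ) : spow (spow x k) l = spow x (k + l + k * l) := by
  induction l with
  | zero => show spow x k = spow x (k + 0 + k * 0); norm_num
  | succ l ih =>
      show spow (spow x k) l * spow x k = spow x (k + (l+1) + k*(l+1))
      rw [ih, spow_add]
      congr 1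
      ring

lemma inv_spow (hinv : IsInverseSemigroup M i) (x : M) (n : ℕ) :
    i (spow x n) = spow (i x) n := by
  induction n with
  | zero => rfl
  | succ n ih =>
      show i (spow x n * x) = spow (i x) n * i x
      rw [inv_mul' hinv, ih, spow_comm]

lemma ims_idem {e a : M} (h : InMaxSubgroup e a) : e * e = e := by
  obtain ⟨h1, h2, b, hb1, hb2, hb3, hb4⟩ := h
  nth_rewrite 2 [← hb3]
  rw [← mul_assoc, h1, hb3]

lemma ims_mul {e a c : M} (ha : InMaxSubgroup e a) (hc : InMaxSubgroup e c) :
    InMaxSubgroup e (a * c) := by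
  obtain ⟨ha1, ha2, b, hb1, hb2, hb3, hb4⟩ := ha
  obtain ⟨hc1, hc2, d, hd1, hd2, hd3, hd4⟩ := hc
  refine ⟨?_, ?_, d * b, ?_, ?_, ?_, ?_⟩
  · rw [← mul_assoc, ha1]
  · rw [mul_assoc, hc2]
  · rw [← mul_assoc, hd1]
  · rw [mul_assoc, hb2]
  · calc a * c * (d * b) = a * (c * d) * b := by simp only [mul_assoc]
      _ = a * e * b := by rw [hd3]
      _ = a * b := by rw [ha2]
      _ = e := hb3
  · calc d * b * (a * c) = d * (b * a) * c := by simp only [mul_assoc]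
      _ = d * e * c := by rw [hb4]
      _ = d * c := by rw [hd2]
      _ = e := hd4

lemma ims_spow {e a : M} (ha : InMaxSubgroup e a) (n : ℕ) :
    InMaxSubgroup e (spow a n) := by
  induction n with
  | zero => exact ha
  | succ n ih => exact ims_mul ih ha

lemma ims_unique {e f a : M} (he : InMaxSubgroup e a) (hf : InMaxSubgroup f a) :
    e = f := by
  obtain ⟨he1, he2, b, hb1, hb2, hb3, hb4⟩ := he
  obtain ⟨hf1, hf2, c, hc1, hc2, hc3, hc4⟩ := hf
  have h1 : e * f = f := by
    rw [← hc3, ← mul_assoc, he1, hc3]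
  have h2 : e * f = e := by
    rw [← hb4, mul_assoc, hf2, hb4]
  rw [← h2, h1]

lemma ims_inv (hinv : IsInverseSemigroup M i) {e a : M} (h : InMaxSubgroup e a) :
    a * i a = e ∧ i a * a = e ∧ e * i a = i a ∧ i a * e = i a ∧
      e * a = a ∧ a * e = a := by
  obtain ⟨h1, h2, b, hb1, hb2, hb3, hb4⟩ := h
  have hba : b = i a := by
    refine hinv.2.2 a b ?_ ?_
    · rw [hb3, h1]
    · rw [hb4, hb1]
  subst hba
  exact ⟨hb3, hb4, hb1, hb2, h1, h2⟩

lemma eidem_comm (hinv : IsInverseSemigroup M i) {e x : M} {k : ℕ}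
    (h : InMaxSubgroup e (spow x k)) : e * x = x * e := by
  set u := spow x k with hu
  obtain ⟨huv, hvu, hev, hve, heu, hue⟩ := ims_inv hinv h
  set v := i u with hv
  have hxu : x * u = u * x := (spow_comm x k).symm
  have h1 : (u * v) * u = u := by rw [huv, heu]
  have h2 : u * (v * u) = u := by rw [hvu, hue]
  have A : e * (x * e) = x * e := by
    rw [← huv]
    calc (u*v) * (x * (u*v)) = (u*v) * ((x*u)*v) := by simp only [mul_assoc]
      _ = (u*v) * ((u*x)*v) := by rw [hxu]
      _ = ((u*v)*u) * (x*v) := by simp only [mul_assoc]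
      _ = u * (x*v) := by rw [h1]
      _ = (u*x)*v := by simp only [mul_assoc]
      _ = (x*u)*v := by rw [← hxu]
      _ = x*(u*v) := by rw [mul_assoc]
  have B : (e * x) * e = e * x := by
    rw [← hvu]
    calc ((v*u)*x)*(v*u) = v*((u*x)*(v*u)) := by simp only [mul_assoc]
      _ = v*((x*u)*(v*u)) := by rw [← hxu]
      _ = v*(x*(u*(v*u))) := by simp only [mul_assoc]
      _ = v*(x*u) := by rw [h2]
      _ = v*(u*x) := by rw [hxu]
      _ = (v*u)*x := by simp only [mul_assoc]
  calc e * x = (e*x)*e := B.symm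
    _ = e*(x*e) := by rw [mul_assoc]
    _ = x*e := A

lemma isEIdem_idem {x e : M} (h : IsEIdem x e) : e * e = e := by
  obtain ⟨k, hk⟩ := h; exact ims_idem hk

lemma isEIdem_unique {x e f : M} (he : IsEIdem x e) (hf : IsEIdem x f) : e = f := by
  obtain ⟨k, hk⟩ := he
  obtain ⟨l, hl⟩ := hf
  have h1 : InMaxSubgroup e (spow x (k + l + k * l)) := by
    rw [← spow_spow]; exact ims_spow hk l
  have h2 : InMaxSubgroup f (spow x (k + l + k * l)) := by
    have : k + l + k * l = l + k + l * k := by ring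
    rw [this, ← spow_spow]; exact ims_spow hl k
  exact ims_unique h1 h2

/-! natural partial order helpers -/

def MLe (b a : M) : Prop := ∃ f : M, f * f = f ∧ b = a * f

lemma le_right {w h : M} (hh : h * h = h) : MLe (w * h) w := ⟨h, hh, rfl⟩

lemma le_left (hinv : IsInverseSemigroup M i) {h : M} (hh : h * h = h) (w : M) :
    MLe (h * w) w := by
  have c : (w * i w) * h = h * (w * i w) :=
    comm_idem hinv (idem_right hinv w) hh
  refine ⟨i w * (h * w), ?_, ?_⟩
  · calc (i w * (h * w)) * (i w * (h * w))
        = i w * ((h * (w * i w)) * (h * w)) := by simp only [mul_assoc]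
      _ = i w * (((w * i w) * h) * (h * w)) := by rw [← c]
      _ = (i w * (w * i w)) * ((h * h) * w) := by simp only [mul_assoc]
      _ = i w * (h * w) := by rw [tri_bab hinv, hh]
  · calc h * w = h * ((w * (i w * w))) := by rw [tri_aba hinv]
      _ = (h * (w * i w)) * w := by simp only [mul_assoc]
      _ = ((w * i w) * h) * w := by rw [← c]
      _ = w * (i w * (h * w)) := by simp only [mul_assoc]

lemma le_trans' (hinv : IsInverseSemigroup M i) {a b c : M}
    (h1 : MLe a b) (h2 : MLe b c) : MLe a c := by
  obtain ⟨h, hh, rfl⟩ := h1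
  obtain ⟨h', hh', rfl⟩ := h2
  exact ⟨h' * h, idem_mul hinv hh' hh, by rw [mul_assoc]⟩

lemma le_mul (hinv : IsInverseSemigroup M i) {a b c d : M}
    (h1 : MLe a b) (h2 : MLe c d) : MLe (a * c) (b * d) := by
  obtain ⟨h, hh, rfl⟩ := h1
  obtain ⟨h', hh', rfl⟩ := h2
  obtain ⟨f0, hf0, hhd⟩ := le_left hinv hh d
  refine ⟨f0 * h', idem_mul hinv hf0 hh', ?_⟩
  calc (b * h) * (d * h') = b * ((h * d) * h') := by simp only [mul_assoc]
    _ = b * ((d * f0) * h') := by rw [hhd]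
    _ = b * d * (f0 * h') := by simp only [mul_assoc]

lemma le_inv (hinv : IsInverseSemigroup M i) {s t : M} (h : MLe s t) :
    MLe (i s) (i t) := by
  obtain ⟨h', hh', rfl⟩ := h
  have : i (t * h') = h' * i t := by
    rw [inv_mul' hinv, idem_inv hinv hh']
  rw [this]
  exact le_left hinv hh' (i t)

lemma le_spow (hinv : IsInverseSemigroup M i) {z x : M} (h : MLe z x) (n : ℕ) :
    MLe (spow z n) (spow x n) := by
  induction n with
  | zero => exact h
  | succ n ih => exact le_mul hinv ih h

lemma le_gxg (hinv : IsInverseSemigroup M i) {g : M} (hg : g * g = g) (x : M) :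
    MLe (g * x * g) x :=
  le_trans' hinv (le_right hg) (le_left hinv hg x)

lemma key1 (hinv : IsInverseSemigroup M i) {g x e : M} (hg : g * g = g)
    (hge : g * e = e) (he : IsEIdem x e) (hf : ∃ f, IsEIdem (g * x * g) f) :
    IsEIdem (g * x * g) e := by
  obtain ⟨k, hk⟩ := he
  obtain ⟨f, p, hp⟩ := hf
  set z := g * x * g with hz
  have hee : e * e = e := ims_idem hk
  have hff : f * f = f := ims_idem hp
  have heg : e * g = e := by rw [comm_idem hinv hee hg, hge]
  have hex : e * x = x * e := eidem_comm hinv hk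
  have hez : e * z = x * e := by
    rw [hz]
    calc e * (g * x * g) = (e * g) * (x * g) := by simp only [mul_assoc]
      _ = e * (x * g) := by rw [heg]
      _ = (e * x) * g := by simp only [mul_assoc]
      _ = (x * e) * g := by rw [hex]
      _ = x * (e * g) := by rw [mul_assoc]
      _ = x * e := by rw [heg]
  have hze : z * e = x * e := by
    rw [hz]
    calc (g * x * g) * e = g * (x * (g * e)) := by simp only [mul_assoc]
      _ = g * (x * e) := by rw [hge]
      _ = g * (e * x) := by rw [← hex]
      _ = (g * e) * x := by simp only [mul_assoc]
      _ = e * x := by rw [hge]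
      _ = x * e := hex
  have h1n : ∀ n, e * spow z n = spow x n * e := by
    intro n; induction n with
    | zero => exact hez
    | succ n ih =>
        show e * (spow z n * z) = spow x n * x * e
        calc e * (spow z n * z) = (e * spow z n) * z := by simp only [mul_assoc]
          _ = (spow x n * e) * z := by rw [ih]
          _ = spow x n * (e * z) := by rw [mul_assoc]
          _ = spow x n * (x * e) := by rw [hez]
          _ = spow x n * x * e := by simp only [mul_assoc]
  have h2n : ∀ n, spow z n * e = spow x n * e := by
    intro n; induction n with
    | zero => exact hze
    | succ n ih =>
        show (spow z n * z) * e = spow x n * x * e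
        calc (spow z n * z) * e = spow z n * (z * e) := by rw [mul_assoc]
          _ = spow z n * (x * e) := by rw [hze]
          _ = spow z n * (e * x) := by rw [← hex]
          _ = (spow z n * e) * x := by simp only [mul_assoc]
          _ = (spow x n * e) * x := by rw [ih]
          _ = spow x n * (x * e) := by rw [mul_assoc, hex]
          _ = spow x n * x * e := by simp only [mul_assoc]
  have hzez : z * e = e * z := by rw [hze, hez]
  have a2 : e * i z = e * i x := by
    have h' := congrArg i hze
    rw [inv_mul' hinv z e, inv_mul' hinv x e, idem_inv hinv hee] at h'
    exact h'
  have a3 : e * i x = i x * e := by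
    have h' := congrArg i hex
    rw [inv_mul' hinv e x, inv_mul' hinv x e, idem_inv hinv hee] at h'
    exact h'.symm
  have h4 : e * i z = i x * e := by rw [a2, a3]
  have h3n : ∀ n, e * spow (i z) n = spow (i x) n * e := by
    intro n; induction n with
    | zero => exact h4
    | succ n ih =>
        show e * (spow (i z) n * i z) = spow (i x) n * i x * e
        calc e * (spow (i z) n * i z) = (e * spow (i z) n) * i z := by
              rw [← mul_assoc]
          _ = (spow (i x) n * e) * i z := by rw [ih]
          _ = spow (i x) n * (e * i z) := by rw [mul_assoc]
          _ = spow (i x) n * (i x * e) := by rw [h4]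
          _ = spow (i x) n * i x * e := by simp only [mul_assoc]
  set q := k + p + k * p with hqdef
  have hq1 : InMaxSubgroup e (spow x q) := by
    rw [hqdef, ← spow_spow]; exact ims_spow hk p
  have hq2 : InMaxSubgroup f (spow z q) := by
    have hq' : q = p + k + p * k := by rw [hqdef]; ring
    rw [hq', ← spow_spow]; exact ims_spow hp k
  obtain ⟨hA1, hA2, hA3, hA4, hA5, hA6⟩ := ims_inv hinv hq1
  obtain ⟨hB1, hB2, hB3, hB4, hB5, hB6⟩ := ims_inv hinv hq2
  have hef : e * f = e := by
    calc e * f = e * (spow z q * i (spow z q)) := by rw [hB1]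
      _ = (e * spow z q) * i (spow z q) := by simp only [mul_assoc]
      _ = (spow x q * e) * i (spow z q) := by rw [h1n]
      _ = spow x q * (e * spow (i z) q) := by rw [mul_assoc, inv_spow hinv]
      _ = spow x q * (spow (i x) q * e) := by rw [h3n]
      _ = (spow x q * i (spow x q)) * e := by rw [← mul_assoc, ← inv_spow hinv]
      _ = e * e := by rw [hA1]
      _ = e := hee
  have hle : MLe f e := by
    have l1 : MLe z x := le_gxg hinv hg x
    have l2 : MLe (spow z q) (spow x q) := le_spow hinv l1 q
    have l3 : MLe (i (spow z q)) (i (spow x q)) := le_inv hinv l2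
    have l4 := le_mul hinv l2 l3
    rw [hB1, hA1] at l4
    exact l4
  obtain ⟨h', hh', hfh⟩ := hle
  have hef2 : e * f = f := by rw [hfh, ← mul_assoc, hee]
  have hfe : f = e := by rw [← hef2, hef]
  exact ⟨p, hfe ▸ hp⟩

lemma spow_conj (hinv : IsInverseSemigroup M i) {a z : M}
    (hgz : (i a * a) * z = z) (n : ℕ) :
    spow (a * z * i a) n = a * spow z n * i a := by
  induction n with
  | zero => rfl
  | succ n ih =>
      show spow (a * z * i a) n * (a * z * i a) = a * (spow z n * z) * i a
      rw [ih]
      calc (a * spow z n * i a) * (a * z * i a)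
          = a * (spow z n * (((i a * a) * z) * i a)) := by simp only [mul_assoc]
        _ = a * (spow z n * (z * i a)) := by rw [hgz]
        _ = a * (spow z n * z) * i a := by simp only [mul_assoc]

lemma conj_ims (hinv : IsInverseSemigroup M i) {a z e : M} {p : ℕ}
    (hgz : (i a * a) * z = z) (hge : (i a * a) * e = e)
    (hp : InMaxSubgroup e (spow z p)) :
    InMaxSubgroup (a * e * i a) (a * spow z p * i a) := by
  obtain ⟨huv, hvu, hev, hve, heu, hue⟩ := ims_inv hinv hp
  set u := spow z p with hu
  set v := i u with hv
  have hgu : (i a * a) * u = u := by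
    rw [← heu, ← mul_assoc, hge]
  have hgv : (i a * a) * v = v := by
    rw [← hev, ← mul_assoc, hge]
  refine ⟨?_, ?_, a * v * i a, ?_, ?_, ?_, ?_⟩
  · calc (a * e * i a) * (a * u * i a)
        = a * (e * (((i a * a) * u) * i a)) := by simp only [mul_assoc]
      _ = a * (e * (u * i a)) := by rw [hgu]
      _ = a * ((e * u) * i a) := by simp only [mul_assoc]
      _ = a * (u * i a) := by rw [heu]
      _ = a * u * i a := by simp only [mul_assoc]
  · calc (a * u * i a) * (a * e * i a)
        = a * (u * (((i a * a) * e) * i a)) := by simp only [mul_assoc]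
      _ = a * (u * (e * i a)) := by rw [hge]
      _ = a * ((u * e) * i a) := by simp only [mul_assoc]
      _ = a * (u * i a) := by rw [hue]
      _ = a * u * i a := by simp only [mul_assoc]
  · calc (a * e * i a) * (a * v * i a)
        = a * (e * (((i a * a) * v) * i a)) := by simp only [mul_assoc]
      _ = a * (e * (v * i a)) := by rw [hgv]
      _ = a * ((e * v) * i a) := by simp only [mul_assoc]
      _ = a * (v * i a) := by rw [hev]
      _ = a * v * i a := by simp only [mul_assoc]
  · calc (a * v * i a) * (a * e * i a)
        = a * (v * (((i a * a) * e) * i a)) := by simp only [mul_assoc]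
      _ = a * (v * (e * i a)) := by rw [hge]
      _ = a * ((v * e) * i a) := by simp only [mul_assoc]
      _ = a * (v * i a) := by rw [hve]
      _ = a * v * i a := by simp only [mul_assoc]
  · calc (a * u * i a) * (a * v * i a)
        = a * (u * (((i a * a) * v) * i a)) := by simp only [mul_assoc]
      _ = a * (u * (v * i a)) := by rw [hgv]
      _ = a * ((u * v) * i a) := by simp only [mul_assoc]
      _ = a * (e * i a) := by rw [huv]
      _ = a * e * i a := by simp only [mul_assoc]
  · calc (a * v * i a) * (a * u * i a)
        = a * (v * (((i a * a) * u) * i a)) := by simp only [mul_assoc]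
      _ = a * (v * (u * i a)) := by rw [hgu]
      _ = a * ((v * u) * i a) := by simp only [mul_assoc]
      _ = a * (e * i a) := by rw [hvu]
      _ = a * e * i a := by simp only [mul_assoc]

lemma key2 (hinv : IsInverseSemigroup M i) {a x e : M}
    (hloc : ∃ f, IsEIdem ((i a * a) * x * (i a * a)) f)
    (he : IsEIdem x e) (hge : (i a * a) * e = e) :
    IsEIdem (a * x * i a) (a * e * i a) := by
  have hg : (i a * a) * (i a * a) = i a * a := idem_left hinv a
  have h1 : IsEIdem ((i a * a) * x * (i a * a)) e := key1 hinv hg hge he hloc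
  obtain ⟨p, hp⟩ := h1
  have hgz : (i a * a) * ((i a * a) * x * (i a * a)) = (i a * a) * x * (i a * a) := by
    calc (i a * a) * ((i a * a) * x * (i a * a))
        = ((i a * a) * (i a * a)) * (x * (i a * a)) := by simp only [mul_assoc]
      _ = (i a * a) * (x * (i a * a)) := by rw [hg]
      _ = (i a * a) * x * (i a * a) := by simp only [mul_assoc]
  have h2 := conj_ims hinv hgz hge hp
  have h3 : a * ((i a * a) * x * (i a * a)) * i a = a * x * i a := by
    calc a * ((i a * a) * x * (i a * a)) * i a
        = (a * (i a * a)) * (x * (i a * (a * i a))) := by simp only [mul_assoc]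
      _ = a * (x * (i a * (a * i a))) := by rw [tri_aba hinv]
      _ = a * (x * i a) := by rw [tri_bab hinv]
      _ = a * x * i a := by simp only [mul_assoc]
  refine ⟨p, ?_⟩
  rw [← h3, spow_conj hinv hgz]
  exact h2

lemma conj_idem (hinv : IsInverseSemigroup M i) {a e : M} (hee : e * e = e)
    (hge : (i a * a) * e = e) :
    (a * e * i a) * (a * e * i a) = a * e * i a := by
  calc (a * e * i a) * (a * e * i a)
      = a * (e * (((i a * a) * e) * i a)) := by simp only [mul_assoc]
    _ = a * (e * (e * i a)) := by rw [hge]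
    _ = a * ((e * e) * i a) := by simp only [mul_assoc]
    _ = a * (e * i a) := by rw [hee]
    _ = a * e * i a := by simp only [mul_assoc]

lemma lemA (hinv : IsInverseSemigroup M i) {a b e : M}
    (h : ((i a * i b) * (b * a)) * e = e) :
    (i a * a) * e = e ∧ (i b * b) * (a * e * i a) = a * e * i a := by
  have hN : i a * (i b * (b * (a * e))) = e := by
    calc i a * (i b * (b * (a * e))) = ((i a * i b) * (b * a)) * e := by
          simp only [mul_assoc]
      _ = e := h
  have c : (a * i a) * (i b * b) = (i b * b) * (a * i a) :=
    comm_idem hinv (idem_right hinv a) (idem_left hinv b)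
  constructor
  · calc (i a * a) * e
        = (i a * a) * (i a * (i b * (b * (a * e)))) := by rw [hN]
      _ = i a * (((a * i a) * (i b * b)) * (a * e)) := by simp only [mul_assoc]
      _ = i a * (((i b * b) * (a * i a)) * (a * e)) := by rw [c]
      _ = i a * (i b * (b * ((a * (i a * a)) * e))) := by simp only [mul_assoc]
      _ = i a * (i b * (b * (a * e))) := by rw [tri_aba hinv]
      _ = e := hN
  · have hPae : (i b * b) * (a * e) = a * e := by
      calc (i b * b) * (a * e)
          = (i b * b) * (a * (i a * (i b * (b * (a * e))))) := by rw [hN]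
        _ = ((i b * b) * (a * i a)) * (i b * (b * (a * e))) := by
              simp only [mul_assoc]
        _ = ((a * i a) * (i b * b)) * (i b * (b * (a * e))) := by rw [← c]
        _ = (a * i a) * ((i b * (b * i b)) * (b * (a * e))) := by
              simp only [mul_assoc]
        _ = (a * i a) * (i b * (b * (a * e))) := by rw [tri_bab hinv]
        _ = a * (i a * (i b * (b * (a * e)))) := by rw [mul_assoc]
        _ = a * e := by rw [hN]
    calc (i b * b) * (a * e * i a) = ((i b * b) * (a * e)) * i a := by
          simp only [mul_assoc]
      _ = (a * e) * i a := by rw [hPae]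

lemma lemB (hinv : IsInverseSemigroup M i) {a b e : M} (hee : e * e = e)
    (hge : (i a * a) * e = e)
    (hP : (i b * b) * (a * e * i a) = a * e * i a) :
    ((i a * i b) * (b * a)) * e = e := by
  have hgeN : i a * (a * e) = e := by rw [← mul_assoc]; exact hge
  have hPN : i b * (b * (a * (e * i a))) = a * (e * i a) := by
    calc i b * (b * (a * (e * i a))) = (i b * b) * (a * e * i a) := by
          simp only [mul_assoc]
      _ = a * e * i a := hP
      _ = a * (e * i a) := by rw [mul_assoc]
  have hQae : (a * (e * i a)) * (a * e) = a * e := by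
    calc (a * (e * i a)) * (a * e) = a * (e * (i a * (a * e))) := by
          simp only [mul_assoc]
      _ = a * (e * e) := by rw [hgeN]
      _ = a * e := by rw [hee]
  calc ((i a * i b) * (b * a)) * e
      = i a * (i b * (b * (a * e))) := by simp only [mul_assoc]
    _ = i a * (i b * (b * ((a * (e * i a)) * (a * e)))) := by rw [hQae]
    _ = i a * ((i b * (b * (a * (e * i a)))) * (a * e)) := by
          simp only [mul_assoc]
    _ = i a * ((a * (e * i a)) * (a * e)) := by rw [hPN]
    _ = i a * (a * e) := by rw [hQae]
    _ = e := hgeN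

end Generic

section Bridge

variable {S : Type*} [Semigroup S] {inv : S → S}

lemma inv₁_one : inv₁ inv (1 : WithOne S) = 1 := dif_pos rfl

lemma inv₁_coe (s : S) : inv₁ inv (s : WithOne S) = ((inv s : S) : WithOne S) := by
  unfold inv₁
  rw [dif_neg (WithOne.coe_ne_one)]
  rw [WithOne.unone_coe]

lemma isInvW (hinv : IsInverseSemigroup S inv) :
    IsInverseSemigroup (WithOne S) (inv₁ inv) := by
  refine ⟨?_, ?_, ?_⟩
  · intro a
    induction a using WithOne.recOneCoe with
    | one => rw [inv₁_one]; simp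
    | coe s =>
        rw [inv₁_coe, ← WithOne.coe_mul, ← WithOne.coe_mul]
        exact WithOne.coe_inj.mpr (hinv.1 s)
  · intro a
    induction a using WithOne.recOneCoe with
    | one => rw [inv₁_one]; simp
    | coe s =>
        rw [inv₁_coe, ← WithOne.coe_mul, ← WithOne.coe_mul]
        exact WithOne.coe_inj.mpr (hinv.2.1 s)
  · intro a b hab hba
    induction a using WithOne.recOneCoe with
    | one =>
        rw [inv₁_one]
        rw [one_mul, mul_one] at hab
        exact hab
    | coe s =>
        induction b using WithOne.recOneCoe with
        | one =>
            exfalso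
            rw [one_mul, mul_one] at hba
            exact WithOne.coe_ne_one hba
        | coe t =>
            rw [inv₁_coe]
            rw [← WithOne.coe_mul, ← WithOne.coe_mul] at hab hba
            exact WithOne.coe_inj.mpr
              (hinv.2.2 s t (WithOne.coe_inj.mp hab) (WithOne.coe_inj.mp hba))

lemma spow_coe (x : S) (n : ℕ) :
    ((spow x n : S) : WithOne S) = spow (x : WithOne S) n := by
  induction n with
  | zero => rfl
  | succ n ih =>
      show ((spow x n * x : S) : WithOne S) = spow (x : WithOne S) n * (x : WithOne S)
      rw [WithOne.coe_mul, ih]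

lemma ims_coe {e u : S} :
    InMaxSubgroup ((e : WithOne S)) ((u : WithOne S)) ↔ InMaxSubgroup e u := by
  constructor
  · rintro ⟨h1, h2, b, hb1, hb2, hb3, hb4⟩
    induction b using WithOne.recOneCoe with
    | one =>
        rw [mul_one] at hb3
        have hue : u = e := WithOne.coe_inj.mp hb3
        subst hue
        have hee : u * u = u := by
          rw [← WithOne.coe_mul] at h1
          exact WithOne.coe_inj.mp h1
        exact ⟨hee, hee, u, hee, hee, hee, hee⟩
    | coe b' =>
        rw [← WithOne.coe_mul] at h1 h2 hb1 hb2 hb3 hb4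
        exact ⟨WithOne.coe_inj.mp h1, WithOne.coe_inj.mp h2, b',
          WithOne.coe_inj.mp hb1, WithOne.coe_inj.mp hb2,
          WithOne.coe_inj.mp hb3, WithOne.coe_inj.mp hb4⟩
  · rintro ⟨h1, h2, b, hb1, hb2, hb3, hb4⟩
    exact ⟨by rw [← WithOne.coe_mul, h1], by rw [← WithOne.coe_mul, h2],
      (b : WithOne S),
      by rw [← WithOne.coe_mul, hb1], by rw [← WithOne.coe_mul, hb2],
      by rw [← WithOne.coe_mul, hb3], by rw [← WithOne.coe_mul, hb4]⟩

lemma isEIdem_coe {x e : S} :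
    IsEIdem ((x : WithOne S)) ((e : WithOne S)) ↔ IsEIdem x e := by
  constructor
  · rintro ⟨k, hk⟩
    rw [← spow_coe] at hk
    exact ⟨k, ims_coe.mp hk⟩
  · rintro ⟨k, hk⟩
    exact ⟨k, by rw [← spow_coe]; exact ims_coe.mpr hk⟩

lemma exists_coe_conj (a : WithOne S) (x : S) :
    ∃ y : S, ((y : WithOne S)) = a * (x : WithOne S) * inv₁ inv a := by
  induction a using WithOne.recOneCoe with
  | one => exact ⟨x, by rw [inv₁_one, one_mul, mul_one]⟩
  | coe s => exact ⟨s * x * inv s, by rw [inv₁_coe]; simp only [WithOne.coe_mul]⟩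

lemma exists_coe_mid (a : WithOne S) (x : S) :
    ∃ t : S, ((t : WithOne S)) =
      (inv₁ inv a * a) * (x : WithOne S) * (inv₁ inv a * a) := by
  induction a using WithOne.recOneCoe with
  | one => exact ⟨x, by rw [inv₁_one]; simp⟩
  | coe s =>
      exact ⟨(inv s * s) * x * (inv s * s),
        by rw [inv₁_coe]; simp only [WithOne.coe_mul]⟩

lemma natGe_iff {p q : WithOne S} (hp : p * p = p) (hq : q * q = q) :
    NatGe p q ↔ p * q = q := by
  constructor
  · rintro ⟨f, hf, rfl⟩
    rw [← mul_assoc, hp]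
  · intro h
    exact ⟨q, hq, h.symm⟩

lemma eY (hinv : IsInverseSemigroup S inv) (hGB : GroupBound S)
    (a : WithOne S) (x e : S) (he : IsEIdem x e)
    (hge : (inv₁ inv a * a) * (e : WithOne S) = (e : WithOne S)) :
    IsEIdem (a * (x : WithOne S) * inv₁ inv a)
      (a * (e : WithOne S) * inv₁ inv a) := by
  have hW := isInvW hinv
  refine key2 hW ?_ (isEIdem_coe.mpr he) hge
  obtain ⟨t, ht⟩ := exists_coe_mid (inv := inv) a x
  obtain ⟨ft, hft⟩ := hGB t
  exact ⟨(ft : WithOne S), by rw [← ht]; exact isEIdem_coe.mpr hft⟩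

lemma main_forward (hinv : IsInverseSemigroup S inv) (hGB : GroupBound S)
    (a b : WithOne S) (x z : S) (h : ActsTo inv (b * a) x z) :
    ∃ y : S, ActsTo inv a x y ∧ ActsTo inv b y z := by
  have hW := isInvW hinv
  obtain ⟨⟨e, he, hnat⟩, hval⟩ := h
  have hE : (e : WithOne S) * (e : WithOne S) = (e : WithOne S) := by
    rw [← WithOne.coe_mul]; exact WithOne.coe_inj.mpr (isEIdem_idem he)
  have hba := (natGe_iff (idem_left hW (b * a)) hE).mp hnat
  rw [inv_mul' hW b a] at hba
  obtain ⟨hge, hP⟩ := lemA hW hba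
  obtain ⟨y, hy⟩ := exists_coe_conj (inv := inv) a x
  have hxy : ActsTo inv a x y :=
    ⟨⟨e, he, (natGe_iff (idem_left hW a) hE).mpr hge⟩, hy⟩
  have hQ : IsEIdem ((y : WithOne S)) (a * (e : WithOne S) * inv₁ inv a) := by
    rw [hy]; exact eY hinv hGB a x e he hge
  obtain ⟨e2, he2⟩ := exists_coe_conj (inv := inv) a e
  have hQ' : IsEIdem y e2 := isEIdem_coe.mp (by rw [he2]; exact hQ)
  have hE2 : (e2 : WithOne S) * (e2 : WithOne S) = (e2 : WithOne S) := by
    rw [← WithOne.coe_mul]; exact WithOne.coe_inj.mpr (isEIdem_idem hQ')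
  have hyz : ActsTo inv b y z := by
    refine ⟨⟨e2, hQ', (natGe_iff (idem_left hW b) hE2).mpr ?_⟩, ?_⟩
    · rw [he2]; exact hP
    · calc (z : WithOne S) = (b * a) * (x : WithOne S) * inv₁ inv (b * a) := hval
        _ = (b * a) * (x : WithOne S) * (inv₁ inv a * inv₁ inv b) := by
              rw [inv_mul' hW b a]
        _ = b * ((a * (x : WithOne S) * inv₁ inv a) * inv₁ inv b) := by
              simp only [mul_assoc]
        _ = b * ((y : WithOne S) * inv₁ inv b) := by rw [← hy]
        _ = b * (y : WithOne S) * inv₁ inv b := by simp only [mul_assoc]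
  exact ⟨y, hxy, hyz⟩

lemma main_backward (hinv : IsInverseSemigroup S inv) (hGB : GroupBound S)
    (a b : WithOne S) (x y z : S)
    (h1 : ActsTo inv a x y) (h2 : ActsTo inv b y z) :
    ActsTo inv (b * a) x z := by
  have hW := isInvW hinv
  obtain ⟨⟨e1, he1, hnat1⟩, hval1⟩ := h1
  obtain ⟨⟨e2, he2, hnat2⟩, hval2⟩ := h2
  have hE1 : (e1 : WithOne S) * (e1 : WithOne S) = (e1 : WithOne S) := by
    rw [← WithOne.coe_mul]; exact WithOne.coe_inj.mpr (isEIdem_idem he1)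
  have hE2 : (e2 : WithOne S) * (e2 : WithOne S) = (e2 : WithOne S) := by
    rw [← WithOne.coe_mul]; exact WithOne.coe_inj.mpr (isEIdem_idem he2)
  have hge : (inv₁ inv a * a) * (e1 : WithOne S) = (e1 : WithOne S) :=
    (natGe_iff (idem_left hW a) hE1).mp hnat1
  have hQ : IsEIdem ((y : WithOne S)) (a * (e1 : WithOne S) * inv₁ inv a) := by
    rw [hval1]; exact eY hinv hGB a x e1 he1 hge
  have hY2 : IsEIdem ((y : WithOne S)) ((e2 : WithOne S)) := isEIdem_coe.mpr he2
  have he2eq : (e2 : WithOne S) = a * (e1 : WithOne S) * inv₁ inv a :=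
    isEIdem_unique hY2 hQ
  have hP : (inv₁ inv b * b) * (a * (e1 : WithOne S) * inv₁ inv a)
      = a * (e1 : WithOne S) * inv₁ inv a := by
    rw [← he2eq]; exact (natGe_iff (idem_left hW b) hE2).mp hnat2
  have hfin := lemB hW hE1 hge hP
  refine ⟨⟨e1, he1, (natGe_iff (idem_left hW (b * a)) hE1).mpr ?_⟩, ?_⟩
  · rw [inv_mul' hW b a]; exact hfin
  · calc (z : WithOne S) = b * (y : WithOne S) * inv₁ inv b := hval2
      _ = b * ((a * (x : WithOne S) * inv₁ inv a) * inv₁ inv b) := by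
            rw [hval1]; simp only [mul_assoc]
      _ = (b * a) * (x : WithOne S) * (inv₁ inv a * inv₁ inv b) := by
            simp only [mul_assoc]
      _ = (b * a) * (x : WithOne S) * inv₁ inv (b * a) := by rw [inv_mul' hW b a]

end Bridge

/-- Lemma 1 (statement 0): for a group-bound inverse semigroup `S`,
`a, b ∈ S¹` and `x ∈ S`, the element `ba · x` is defined iff both `a · x`
and `b · (a · x)` are defined, and in that case `ba · x = b · (a · x)`;
thus `x ↦ a · x` is an action of `S¹` on `S` by partial one-to-one maps. -/
theorem action_well_defined {S : Type*} [Semigroup S] (inv : S → S)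
    (hinv : IsInverseSemigroup S inv) (hGB : GroupBound S)
    (a b : WithOne S) (x : S) :
    ((∃ z : S, ActsTo inv (b * a) x z) ↔
      ∃ y : S, ActsTo inv a x y ∧ ∃ z : S, ActsTo inv b y z) ∧
    (∀ z : S, ActsTo inv (b * a) x z →
      ∃ y : S, ActsTo inv a x y ∧ ActsTo inv b y z) := by
  constructor
  · constructor
    · rintro ⟨z, hz⟩
      obtain ⟨y, h1, h2⟩ := main_forward hinv hGB a b x z hz
      exact ⟨y, h1, z, h2⟩
    · rintro ⟨y, h1, z, h2⟩
      exact ⟨z, main_backward hinv hGB a b x y z h1 h2⟩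
  · intro z hz
    exact main_forward hinv hGB a b x z hz

end SgConjPaper
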